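/- Let w be any complex root of the polynomial X^5 + 10X^4 + 5X^3 + 5. Then the set of irreducible λ-quiddities over ⟨w⟩ is exactly {(0, kw, 0, −kw) : k ∈ ℤ} ∪ {(kw, 0, −kw, 0) : k ∈ ℤ}. -/

import Mathlib

open Matrix Polynomial

noncomputable section

/-- The elementary matrix [[a, -1], [1, 0]]. -/
def matE (a : ℂ) : Matrix (Fin 2) (Fin 2) ℂ := !![a, -1; 1, 0]

/-- M_n(a_1, …, a_n) = matE a_n * matE a_{n-1} * ⋯ * matE a_1, for the list [a_1, …, a_n]. -/
def Mlist (l : List ℂ) : Matrix (Fin 2) (Fin 2) ℂ := (l.reverse.map matE).prod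

/-- A λ-quiddity over R : a nonempty tuple of elements of R with M_n(a_1,…,a_n) = ±Id. -/
def IsQuiddity (R : Set ℂ) (l : List ℂ) : Prop :=
  l ≠ [] ∧ (∀ x ∈ l, x ∈ R) ∧ (Mlist l = 1 ∨ Mlist l = -1)

/-- (a_1,…,a_n) ⊕ (b_1,…,b_m) := (a_1+b_m, a_2,…,a_{n-1}, a_n+b_1, b_2,…,b_{m-1}). -/
def oplus (a b : List ℂ) : List ℂ :=
  (a.headI + b.getLastD 0) ::
    (a.tail.dropLast ++ (a.getLastD 0 + b.headI) :: b.tail.dropLast)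

/-- b is obtained from a by a cyclic permutation of a or of the reversal of a. -/
def CyclicEquiv (a b : List ℂ) : Prop :=
  (∃ k, b = a.rotate k) ∨ (∃ k, b = a.reverse.rotate k)

/-- A λ-quiddity c over R is reducible if c ∼ (a_1,…,a_m) ⊕ (b_1,…,b_l) with
(a_1,…,a_m) a tuple of elements of R, (b_1,…,b_l) a λ-quiddity over R, m ≥ 3 and l ≥ 3. -/
def ReducibleQuiddity (R : Set ℂ) (c : List ℂ) : Prop :=
  ∃ a b : List ℂ, (∀ x ∈ a, x ∈ R) ∧ IsQuiddity R b ∧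
    3 ≤ a.length ∧ 3 ≤ b.length ∧ CyclicEquiv c (oplus a b)

/-- The irreducible λ-quiddities over R : the λ-quiddities of size ≥ 3 which are not
reducible (those of size < 3, i.e. (0,0), are by convention not irreducible). -/
def IrreducibleQuiddity (R : Set ℂ) (c : List ℂ) : Prop :=
  IsQuiddity R c ∧ 3 ≤ c.length ∧ ¬ ReducibleQuiddity R c

/-- The subgroup ⟨w⟩ = {kw : k ∈ ℤ} of (ℂ, +), as a set. -/
def subgroupGen (w : ℂ) : Set ℂ := {x | ∃ k : ℤ, x = (k : ℂ) * w}

end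

/-! ### Auxiliary material -/

noncomputable section StmtAux

namespace StmtAux

/-! #### Basic lemmas on `Mlist` -/

lemma Mlist_nil : Mlist [] = 1 := rfl

lemma Mlist_append (s t : List ℂ) : Mlist (s ++ t) = Mlist t * Mlist s := by
  simp [Mlist, List.reverse_append]

lemma Mlist_singleton (x : ℂ) : Mlist [x] = matE x := by simp [Mlist]

lemma Mlist_cons (x : ℂ) (l : List ℂ) : Mlist (x :: l) = Mlist l * matE x := by
  rw [show x :: l = [x] ++ l from rfl, Mlist_append, Mlist_singleton]

lemma matE_mul_matE (x y : ℂ) : matE y * matE x = !![y*x - 1, -y; x, -1] := by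
  simp [matE, Matrix.mul_fin_two]; ring_nf

set_option linter.unnecessarySeqFocus false in
lemma red_identity (x y : ℂ) : matE y * matE 0 * matE x = -matE (x+y) := by
  ext i j
  fin_cases i <;> fin_cases j <;> simp [matE, Matrix.mul_fin_two] <;> ring

/-- The "±Id" predicate. -/
def Qpm (l : List ℂ) : Prop := Mlist l = 1 ∨ Mlist l = -1

lemma neg_pm {A : Matrix (Fin 2) (Fin 2) ℂ} :
    (-A = 1 ∨ -A = -1) ↔ (A = 1 ∨ A = -1) := by
  constructor
  · rintro (h1 | h1)
    · right; rw [← neg_neg A, h1]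
    · left; rw [← neg_neg A, h1, neg_neg]
  · rintro (h1 | h1) <;> rw [h1] <;> simp

lemma mul_pm_comm {A B : Matrix (Fin 2) (Fin 2) ℂ} (h : A * B = 1 ∨ A * B = -1) :
    B * A = 1 ∨ B * A = -1 := by
  rcases h with h | h
  · left; exact mul_eq_one_comm.mp h
  · right
    have : A * (-B) = 1 := by rw [Matrix.mul_neg, h, neg_neg]
    have := mul_eq_one_comm.mp this
    rw [Matrix.neg_mul] at this
    rw [← neg_neg (B*A), this]

lemma Qpm_rotate {l : List ℂ} (h : Qpm l) (j : ℕ) : Qpm (l.rotate j) := by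
  rcases eq_or_ne l [] with rfl | hl
  · simpa using h
  rw [← List.rotate_mod]
  have hpos : 0 < l.length := List.length_pos_iff.mpr hl
  have hj : j % l.length ≤ l.length := le_of_lt (Nat.mod_lt _ hpos)
  rw [List.rotate_eq_drop_append_take hj]
  have hsplit : l = l.take (j % l.length) ++ l.drop (j % l.length) :=
    (List.take_append_drop _ l).symm
  unfold Qpm at h ⊢
  rw [Mlist_append]
  rw [hsplit, Mlist_append] at h
  exact mul_pm_comm h

/-- The fundamental reduction identity. -/
lemma Mlist_red (x y : ℂ) (r : List ℂ) :
    Mlist (x :: 0 :: y :: r) = -Mlist ((x + y) :: r) := by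
  rw [show x :: (0:ℂ) :: y :: r = [x, 0, y] ++ r from rfl, Mlist_append]
  have h3 : Mlist [x, 0, y] = -matE (x + y) := by
    rw [Mlist_cons, Mlist_cons, Mlist_singleton, ← red_identity x y]
  rw [h3, Mlist_cons, Matrix.mul_neg]

/-! #### Rotation plumbing -/

lemma rot_concat {α : Type*} (m : List α) (e : α) : (m ++ [e]).rotate m.length = e :: m := by
  rw [List.rotate_eq_drop_append_take (by simp)]
  simp

lemma rot1 (l : List ℂ) (h0 : (0:ℂ) ∈ l) (h3 : 3 ≤ l.length) :
    ∃ (j : ℕ) (x y : ℂ) (r : List ℂ), l.rotate j = x :: 0 :: y :: r := by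
  obtain ⟨s, t, rfl⟩ := List.append_of_mem h0
  have h1 : (s ++ 0 :: t).rotate s.length = 0 :: (t ++ s) := by
    rw [List.rotate_eq_drop_append_take (by simp)]
    simp
  have hu : t ++ s ≠ [] := by
    intro he
    simp [List.append_eq_nil_iff] at he
    simp [he.1, he.2] at h3
  obtain ⟨v, x, huv⟩ := List.eq_nil_or_concat (t ++ s) |>.resolve_left hu
  rw [List.concat_eq_append] at huv
  have hv : v ≠ [] := by
    intro he; subst he
    have := congrArg List.length huv
    simp at this
    simp at h3
    omega
  obtain ⟨y, r, rfl⟩ := List.exists_cons_of_ne_nil hv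
  refine ⟨s.length + (0 :: y :: r).length, x, y, r, ?_⟩
  rw [← List.rotate_rotate, h1, huv,
    show (0:ℂ) :: ((y :: r) ++ [x]) = (0 :: y :: r) ++ [x] by simp]
  exact rot_concat (0 :: y :: r) x

lemma rot2 (l : List ℂ) (h0 : (0:ℂ) ∈ l) (h5 : 5 ≤ l.length) :
    ∃ (j : ℕ) (z x y : ℂ) (r : List ℂ), l.rotate j = z :: x :: 0 :: y :: r := by
  obtain ⟨j, x, y, r, hj⟩ := rot1 l h0 (by omega)
  have hlr : l.length = r.length + 3 := by
    have := congrArg List.length hj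
    simp at this
    omega
  have hr : r ≠ [] := by intro he; rw [he] at hlr; simp at hlr; omega
  obtain ⟨r', e, hre⟩ := List.eq_nil_or_concat r |>.resolve_left hr
  rw [List.concat_eq_append] at hre
  refine ⟨j + (x :: 0 :: y :: r').length, e, x, y, r', ?_⟩
  rw [← List.rotate_rotate, hj, hre,
    show x :: (0:ℂ) :: y :: (r' ++ [e]) = (x :: 0 :: y :: r') ++ [e] by simp]
  exact rot_concat _ e

/-! #### The generic product, in cons order -/

def Mg (l : List ℂ) : Matrix (Fin 2) (Fin 2) ℂ := (l.map matE).prod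

lemma Mlist_eq_Mg (l : List ℂ) : Mlist l = Mg l.reverse := rfl

lemma Mg_cons (a : ℂ) (m : List ℂ) : Mg (a :: m) = matE a * Mg m := by simp [Mg]

lemma Mg_entry00 (a : ℂ) (M : Matrix (Fin 2) (Fin 2) ℂ) :
    (matE a * M) 0 0 = a * M 0 0 - M 1 0 := by
  simp [matE, Matrix.mul_apply, Fin.sum_univ_two]; ring

lemma Mg_entry10 (a : ℂ) (M : Matrix (Fin 2) (Fin 2) ℂ) :
    (matE a * M) 1 0 = M 0 0 := by
  simp [matE, Matrix.mul_apply, Fin.sum_univ_two]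

lemma pp_grow : ∀ (m : List ℂ), (∀ x ∈ m, 3 ≤ ‖x‖) →
    1 ≤ ‖Mg m 0 0‖ ∧ 2 * ‖Mg m 1 0‖ ≤ ‖Mg m 0 0‖ := by
  intro m
  induction m with
  | nil => intro _; simp [Mg]
  | cons a m ih =>
    intro hm
    obtain ⟨h1, h2⟩ := ih (fun x hx => hm x (List.mem_cons_of_mem _ hx))
    have ha : 3 ≤ ‖a‖ := hm a (List.mem_cons_self)
    rw [Mg_cons, Mg_entry00, Mg_entry10]
    have habs : ‖a * Mg m 0 0‖ - ‖Mg m 1 0‖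
        ≤ ‖a * Mg m 0 0 - Mg m 1 0‖ := norm_sub_norm_le _ _
    have hmul : ‖a * Mg m 0 0‖
        = ‖a‖ * ‖Mg m 0 0‖ := norm_mul _ _
    constructor <;> nlinarith [norm_nonneg (Mg m 0 0), norm_nonneg (Mg m 1 0)]

lemma pp_ne (m : List ℂ) (hm : ∀ x ∈ m, 3 ≤ ‖x‖) (hne : m ≠ []) :
    Mg m ≠ 1 ∧ Mg m ≠ -1 := by
  obtain ⟨a, m', rfl⟩ := List.exists_cons_of_ne_nil hne
  have h10 : Mg (a :: m') 1 0 ≠ 0 := by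
    rw [Mg_cons, Mg_entry10]
    intro h
    have := (pp_grow m' (fun x hx => hm x (List.mem_cons_of_mem _ hx))).1
    rw [h] at this; simp at this; linarith
  constructor <;> intro h <;> rw [h] at h10 <;> simp [Matrix.one_apply] at h10

/-! #### The minimal polynomial -/

def mu : Polynomial ℤ := X^5 + C 10 * X^4 + C 5 * X^3 + C 5

lemma mu_monic : mu.Monic := by unfold mu; monicity!

lemma mu_degree : mu.degree = 5 := by unfold mu; compute_degree!

lemma mu_coeff : mu.coeff 0 = 5 ∧ mu.coeff 1 = 0 ∧ mu.coeff 2 = 0 ∧ mu.coeff 3 = 5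
    ∧ mu.coeff 4 = 10 := by
  unfold mu
  norm_num [coeff_X_pow, coeff_C]

lemma mu_irred : Irreducible mu := by
  apply irreducible_of_eisenstein_criterion (P := Ideal.span {(5:ℤ)})
  · rw [Ideal.span_singleton_prime (by norm_num)]
    norm_num
  · rw [mu_monic.leadingCoeff, Ideal.mem_span_singleton]
    norm_num
  · intro n hn
    rw [mu_degree] at hn
    have hn5 : n < 5 := by exact_mod_cast hn
    rw [Ideal.mem_span_singleton]
    interval_cases n <;> norm_num [mu_coeff.1, mu_coeff.2.1, mu_coeff.2.2.1,
      mu_coeff.2.2.2.1, mu_coeff.2.2.2.2]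
  · rw [mu_degree]; norm_num
  · rw [Ideal.span_singleton_pow, Ideal.mem_span_singleton, mu_coeff.1]
    norm_num
  · exact mu_monic.isPrimitive

def muQ : Polynomial ℚ := mu.map (Int.castRingHom ℚ)

lemma muQ_irred : Irreducible muQ :=
  (Polynomial.IsPrimitive.Int.irreducible_iff_irreducible_map_cast mu_monic.isPrimitive).mp mu_irred

lemma muQ_monic : muQ.Monic := mu_monic.map _

lemma aeval_mu (α : ℂ) : aeval α mu = α^5 + 10*α^4 + 5*α^3 + 5 := by
  simp [mu, map_ofNat]

lemma exists_real_root : ∃ x : ℝ, (aeval (x:ℂ) mu = 0) ∧ 3 ≤ ‖(x:ℂ)‖ := by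
  have hcont : ContinuousOn (fun x : ℝ => x^5 + 10*x^4 + 5*x^3 + 5) (Set.Icc (-10) (-9)) := by
    fun_prop
  have key := intermediate_value_Icc (by norm_num : (-10:ℝ) ≤ -9) hcont
  have h0 : (0:ℝ) ∈ Set.Icc ((-10:ℝ)^5 + 10*(-10)^4 + 5*(-10)^3 + 5)
      ((-9:ℝ)^5 + 10*(-9)^4 + 5*(-9)^3 + 5) := by
    norm_num
  obtain ⟨x, hx, hfx⟩ := key h0
  refine ⟨x, ?_, ?_⟩
  · rw [aeval_mu]
    have hfx' : x^5 + 10*x^4 + 5*x^3 + 5 = 0 := hfx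
    have : ((x^5 + 10*x^4 + 5*x^3 + 5 : ℝ) : ℂ) = 0 := by rw [hfx']; norm_num
    push_cast at this
    linear_combination this
  · rw [Complex.norm_real, Real.norm_eq_abs]
    rcases hx with ⟨h1, h2⟩
    rw [abs_of_nonpos (by linarith)]
    linarith

lemma root_transfer {w w' : ℂ} (hw : aeval w mu = 0) (hw' : aeval w' mu = 0)
    (p : Polynomial ℤ) (hp : aeval w p = 0) : aeval w' p = 0 := by
  have hmin : minpoly ℚ w = muQ := by
    apply (minpoly.eq_of_irreducible_of_monic muQ_irred _ muQ_monic).symm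
    rwa [muQ, show ((Int.castRingHom ℚ) : ℤ →+* ℚ) = algebraMap ℤ ℚ from rfl,
      aeval_map_algebraMap]
  have hdvd : muQ ∣ p.map (Int.castRingHom ℚ) := by
    rw [← hmin]
    apply minpoly.dvd
    rwa [show ((Int.castRingHom ℚ) : ℤ →+* ℚ) = algebraMap ℤ ℚ from rfl, aeval_map_algebraMap]
  obtain ⟨g, hg⟩ := hdvd
  have := congrArg (aeval w') hg
  rw [show ((Int.castRingHom ℚ) : ℤ →+* ℚ) = algebraMap ℤ ℚ from rfl,
    aeval_map_algebraMap] at this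
  rw [this, _root_.map_mul, muQ, show ((Int.castRingHom ℚ) : ℤ →+* ℚ) = algebraMap ℤ ℚ from rfl,
    aeval_map_algebraMap, hw']
  ring

/-! #### Transfer between roots, via matrices of integer polynomials -/

def mEP (k : ℤ) : Matrix (Fin 2) (Fin 2) (Polynomial ℤ) := !![C k * X, -1; 1, 0]

def MgP (κ : List ℤ) : Matrix (Fin 2) (Fin 2) (Polynomial ℤ) := (κ.map mEP).prod

def phiC (α : ℂ) : Polynomial ℤ →+* ℂ := (aeval α : Polynomial ℤ →ₐ[ℤ] ℂ).toRingHom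

lemma MgP_cons (k : ℤ) (κ : List ℤ) : MgP (k :: κ) = mEP k * MgP κ := by simp [MgP]

lemma mapMatrix_mEP (k : ℤ) (α : ℂ) : (phiC α).mapMatrix (mEP k) = matE ((k:ℂ) * α) := by
  ext i j
  fin_cases i <;> fin_cases j <;>
    simp [mEP, matE, phiC, RingHom.mapMatrix_apply, Matrix.map_apply]

lemma mapMatrix_MgP (κ : List ℤ) (α : ℂ) :
    (phiC α).mapMatrix (MgP κ) = Mg (κ.map fun k : ℤ => (k:ℂ) * α) := by
  induction κ with
  | nil => simp [MgP, Mg]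
  | cons k κ ih =>
    rw [MgP_cons, List.map_cons, Mg_cons, _root_.map_mul, ih, mapMatrix_mEP]

lemma Mg_transfer {κ : List ℤ} {w w' : ℂ} (hw : aeval w mu = 0) (hw' : aeval w' mu = 0)
    (E : Matrix (Fin 2) (Fin 2) ℤ)
    (h : Mg (κ.map fun k : ℤ => (k:ℂ) * w) = (Int.castRingHom ℂ).mapMatrix E) :
    Mg (κ.map fun k : ℤ => (k:ℂ) * w') = (Int.castRingHom ℂ).mapMatrix E := by
  rw [← mapMatrix_MgP] at h ⊢
  ext i j
  have hij := congrFun (congrFun (congrArg (fun M => (M : Matrix (Fin 2) (Fin 2) ℂ)) h) i) j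
  simp only [RingHom.mapMatrix_apply, Matrix.map_apply] at hij ⊢
  have hz : aeval w (MgP κ i j - C (E i j)) = 0 := by
    rw [_root_.map_sub, aeval_C]
    show (phiC w) (MgP κ i j) - _ = 0
    rw [hij]
    simp
  have := root_transfer hw hw' _ hz
  rw [_root_.map_sub, aeval_C, sub_eq_zero] at this
  show (phiC w') (MgP κ i j) = _
  rw [show (phiC w') (MgP κ i j) = aeval w' (MgP κ i j) from rfl, this]
  simp

lemma NZ (κ : List ℤ) (hk : ∀ k ∈ κ, k ≠ 0) (hne : κ ≠ []) {w : ℂ} (hw : aeval w mu = 0) :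
    Mg (κ.map fun k : ℤ => (k:ℂ) * w) ≠ 1 ∧ Mg (κ.map fun k : ℤ => (k:ℂ) * w) ≠ -1 := by
  obtain ⟨x, hx, hx3⟩ := exists_real_root
  have habs : ∀ y ∈ κ.map fun k : ℤ => (k:ℂ) * (x:ℂ), 3 ≤ ‖y‖ := by
    intro y hy
    simp only [List.mem_map] at hy
    obtain ⟨k, hkmem, rfl⟩ := hy
    rw [norm_mul]
    have h1 : (1:ℝ) ≤ ‖(k:ℂ)‖ := by
      rw [show ((k:ℂ)) = ((k:ℝ):ℂ) by push_cast; ring, Complex.norm_real, Real.norm_eq_abs]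
      rw [show |(k:ℝ)| = ((|k| : ℤ) : ℝ) by push_cast; ring]
      exact_mod_cast Int.one_le_abs (hk k hkmem)
    nlinarith [norm_nonneg (k:ℂ)]
  have hne' : κ.map (fun k : ℤ => (k:ℂ) * (x:ℂ)) ≠ [] := by
    intro h2
    exact hne (List.map_eq_nil_iff.mp h2)
  have hpp := pp_ne _ habs hne'
  constructor <;> intro h
  · have h1 : Mg (κ.map fun k : ℤ => (k:ℂ) * w)
        = (Int.castRingHom ℂ).mapMatrix (1 : Matrix (Fin 2) (Fin 2) ℤ) := by
      rw [h, _root_.map_one]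
    have := Mg_transfer hw hx 1 h1
    rw [_root_.map_one] at this
    exact hpp.1 this
  · have h1 : Mg (κ.map fun k : ℤ => (k:ℂ) * w)
        = (Int.castRingHom ℂ).mapMatrix (-1 : Matrix (Fin 2) (Fin 2) ℤ) := by
      rw [h, _root_.map_neg, _root_.map_one]
    have := Mg_transfer hw hx (-1) h1
    rw [_root_.map_neg, _root_.map_one] at this
    exact hpp.2 this

/-! #### Quiddity-specific lemmas -/

lemma mem_zero (w : ℂ) : (0:ℂ) ∈ subgroupGen w := ⟨0, by simp⟩

lemma mem_neg {w x : ℂ} (h : x ∈ subgroupGen w) : -x ∈ subgroupGen w := by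
  obtain ⟨k, rfl⟩ := h
  exact ⟨-k, by push_cast; ring⟩

lemma mem_add {w x y : ℂ} (hx : x ∈ subgroupGen w) (hy : y ∈ subgroupGen w) :
    x + y ∈ subgroupGen w := by
  obtain ⟨k, rfl⟩ := hx
  obtain ⟨k', rfl⟩ := hy
  exact ⟨k + k', by push_cast; ring⟩

lemma exists_int_list {w : ℂ} : ∀ (m : List ℂ), (∀ x ∈ m, x ∈ subgroupGen w) →
    ∃ κ : List ℤ, m = κ.map (fun k : ℤ => (k:ℂ) * w) := by
  intro m
  induction m with
  | nil => exact fun _ => ⟨[], rfl⟩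
  | cons x m ih =>
    intro hm
    obtain ⟨k, hk⟩ := hm x (List.mem_cons_self)
    obtain ⟨κ, hκ⟩ := ih (fun y hy => hm y (List.mem_cons_of_mem _ hy))
    exact ⟨k :: κ, by rw [List.map_cons, ← hk, ← hκ]⟩

lemma NZc {w : ℂ} (hwmu : aeval w mu = 0) (l : List ℂ) (hm : ∀ x ∈ l, x ∈ subgroupGen w)
    (h0 : (0:ℂ) ∉ l) (hne : l ≠ []) : ¬ Qpm l := by
  obtain ⟨κ, rfl⟩ := exists_int_list l hm
  intro hq
  unfold Qpm at hq
  rw [Mlist_eq_Mg, ← List.map_reverse] at hq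
  have hnz : ∀ k ∈ κ.reverse, k ≠ 0 := by
    intro k hk hk0
    apply h0
    rw [List.mem_reverse] at hk
    subst hk0
    exact List.mem_map.mpr ⟨0, hk, by simp⟩
  have hne2 : κ.reverse ≠ [] := by
    intro h
    apply hne
    rw [List.reverse_eq_nil_iff] at h
    rw [h]
    rfl
  have := NZ κ.reverse hnz hne2 hwmu
  rcases hq with h | h
  · exact this.1 h
  · exact this.2 h

lemma hasZero {w : ℂ} (hwmu : aeval w mu = 0) (l : List ℂ) (hm : ∀ x ∈ l, x ∈ subgroupGen w)
    (hne : l ≠ []) (hq : Qpm l) : (0:ℂ) ∈ l := by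
  by_contra h0
  exact NZc hwmu l hm h0 hne hq

lemma no3 {w : ℂ} (hwmu : aeval w mu = 0) (b : List ℂ) (hmem : ∀ x ∈ b, x ∈ subgroupGen w)
    (hlen : b.length = 3) : ¬ Qpm b := by
  intro hq
  have h0 : (0:ℂ) ∈ b := hasZero hwmu b hmem (by intro h; rw [h] at hlen; simp at hlen) hq
  obtain ⟨j, x, y, r, hrot⟩ := rot1 b h0 (by omega)
  have hq' : Qpm (b.rotate j) := Qpm_rotate hq j
  rw [hrot] at hq'
  have hr : r = [] := by
    have := congrArg List.length hrot
    simp at this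
    rw [hlen] at this
    exact List.length_eq_zero_iff.mp (by omega)
  subst hr
  have hM : Mlist [x, 0, y] = -matE (x+y) := by
    have := Mlist_red x y []
    rw [Mlist_singleton] at this
    exact this
  unfold Qpm at hq'
  rw [hM] at hq'
  rcases hq' with h | h <;>
  · have h1 := congrFun (congrFun h 1) 0
    simp [matE, Matrix.one_apply] at h1

lemma Mlist_quid1 (z : ℂ) : Mlist [0,z,0,-z] = 1 := by
  show matE (-z) * (matE 0 * (matE z * (matE 0 * 1))) = 1
  ext i j
  fin_cases i <;> fin_cases j <;> simp [matE, Matrix.mul_fin_two, Matrix.one_fin_two]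

lemma Mlist_quid2 (z : ℂ) : Mlist [z,0,-z,0] = 1 := by
  show matE 0 * (matE (-z) * (matE 0 * (matE z * 1))) = 1
  ext i j
  fin_cases i <;> fin_cases j <;> simp [matE, Matrix.mul_fin_two, Matrix.one_fin_two]

lemma oplus_len (a b : List ℂ) (ha : 2 ≤ a.length) (hb : 2 ≤ b.length) :
    (oplus a b).length = a.length + b.length - 2 := by
  simp [oplus]
  omega

lemma oplus_calc (x y z : ℂ) (r : List ℂ) :
    oplus [0, x, 0, -x] (((x+y) :: r) ++ [z]) = z :: x :: 0 :: y :: r := by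
  rw [show ((x+y) :: r) ++ [z] = (x+y) :: (r ++ [z]) from rfl]
  simp [oplus, List.dropLast_concat]
  rw [show ((x+y) :: (r ++ [z])) = ((x+y) :: r) ++ [z] from rfl, List.getLast?_concat]
  simp

end StmtAux

end StmtAux

open StmtAux

theorem stmt9 (w : ℂ) (hw : w ^ 5 + 10 * w ^ 4 + 5 * w ^ 3 + 5 = 0) :
    {c : List ℂ | IrreducibleQuiddity (subgroupGen w) c} =
      {c : List ℂ | ∃ k : ℤ, c = [0, (k : ℂ) * w, 0, -((k : ℂ) * w)]} ∪
      {c : List ℂ | ∃ k : ℤ, c = [(k : ℂ) * w, 0, -((k : ℂ) * w), 0]} := by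
  have hwmu : Polynomial.aeval w mu = 0 := by rw [aeval_mu]; exact hw
  ext c
  simp only [Set.mem_setOf_eq, Set.mem_union]
  constructor
  · rintro ⟨⟨hne, hmem, hpm⟩, hlen, hnred⟩
    have hq : Qpm c := hpm
    have h0 : (0:ℂ) ∈ c := hasZero hwmu c hmem hne hq
    rcases lt_or_ge c.length 5 with hlt | hge
    -- small cases : length 3 or 4
    · interval_cases hc : c.length
      · exact absurd hq (no3 hwmu c hmem hc)
      · -- length 4
        obtain ⟨j, x, y, r, hrot⟩ := rot1 c h0 (by omega)
        have hlr : r.length = 1 := by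
          have := congrArg List.length hrot
          simp at this
          omega
        obtain ⟨z, rfl⟩ := List.length_eq_one_iff.mp hlr
        have hq' : Qpm (c.rotate j) := Qpm_rotate hq j
        rw [hrot] at hq'
        unfold Qpm at hq'
        rw [Mlist_red, Mlist_cons, Mlist_singleton, matE_mul_matE] at hq'
        have hyz : y = -x ∧ z = 0 := by
          rcases hq' with h | h
          · rw [neg_eq_iff_eq_neg] at h
            have h1 := congrFun (congrFun h 1) 0
            have h2 := congrFun (congrFun h 0) 1
            simp [Matrix.one_apply] at h1 h2
            constructor
            · linear_combination h1
            · exact h2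
          · rw [neg_eq_iff_eq_neg, neg_neg] at h
            have h1 := congrFun (congrFun h 1) 1
            simp [Matrix.one_apply] at h1
            exact absurd h1 (by norm_num)
        obtain ⟨rfl, rfl⟩ := hyz
        obtain ⟨k, hk⟩ : x ∈ subgroupGen w := by
          apply hmem
          apply (List.mem_rotate (n := j)).mp
          rw [hrot]
          simp
        have hj4 : j % 4 < 4 := Nat.mod_lt _ (by norm_num)
        have h1 : c.rotate (j % 4) = [x, 0, -x, 0] := by
          rw [← hc, List.rotate_mod, hrot]
        have hc2 : c = ([x, 0, -x, 0] : List ℂ).rotate (4 - j % 4) := by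
          have h2 : (c.rotate (j % 4)).rotate (4 - j % 4) = c := by
            rw [List.rotate_rotate, show j % 4 + (4 - j % 4) = 4 by omega, ← hc,
              List.rotate_length]
          rw [← h2, h1]
        subst hk
        have hm4 : 1 ≤ 4 - j % 4 ∧ 4 - j % 4 ≤ 4 := by omega
        set m := 4 - j % 4 with hmdef
        clear_value m
        obtain ⟨hm1, hm2⟩ := hm4
        interval_cases m
        · -- rotate 1 : [0, -x, 0, x]
          refine Or.inl ⟨-k, ?_⟩
          rw [hc2, List.rotate_eq_drop_append_take (by norm_num)]
          push_cast
          norm_num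
        · refine Or.inr ⟨-k, ?_⟩
          rw [hc2, List.rotate_eq_drop_append_take (by norm_num)]
          push_cast
          norm_num
        · refine Or.inl ⟨k, ?_⟩
          rw [hc2, List.rotate_eq_drop_append_take (by norm_num)]
          norm_num
        · refine Or.inr ⟨k, ?_⟩
          rw [hc2, List.rotate_eq_drop_append_take (by norm_num)]
          norm_num
    · -- length ≥ 5 : c is reducible, contradiction
      exfalso
      apply hnred
      obtain ⟨j, z, x, y, r, hrot⟩ := rot2 c h0 hge
      have hq' : Qpm (c.rotate j) := Qpm_rotate hq j
      rw [hrot] at hq'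
      unfold Qpm at hq'
      rw [Mlist_cons, Mlist_red, Matrix.neg_mul] at hq'
      have hq2 : Mlist ((x+y) :: r) * matE z = 1 ∨ Mlist ((x+y) :: r) * matE z = -1 :=
        neg_pm.mp hq'
      have hq3 := mul_pm_comm hq2
      set b : List ℂ := ((x+y) :: r) ++ [z] with hbdef
      have hQb : Qpm b := by
        unfold Qpm
        rw [hbdef, Mlist_append, Mlist_singleton]
        exact hq3
      have hmem' : ∀ u ∈ c.rotate j, u ∈ subgroupGen w :=
        fun u hu => hmem u ((List.mem_rotate).mp hu)
      have hxR : x ∈ subgroupGen w := hmem' x (by rw [hrot]; simp)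
      have hyR : y ∈ subgroupGen w := hmem' y (by rw [hrot]; simp)
      have hzR : z ∈ subgroupGen w := hmem' z (by rw [hrot]; simp)
      have hrR : ∀ u ∈ r, u ∈ subgroupGen w := by
        intro u hu
        exact hmem' u (by rw [hrot]; simp [hu])
      have hclen : c.length = r.length + 4 := by
        have := congrArg List.length hrot
        simp at this
        omega
      refine ⟨[0, x, 0, -x], b, ?_, ⟨by simp [hbdef], ?_, hQb⟩, by norm_num, ?_, ?_⟩
      · intro u hu
        simp at hu
        rcases hu with rfl | rfl | rfl | rfl
        · exact mem_zero w
        · exact hxR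
        · exact mem_zero w
        · exact mem_neg hxR
      · intro u hu
        rw [hbdef] at hu
        simp at hu
        rcases hu with rfl | hu | rfl
        · exact mem_add hxR hyR
        · exact hrR u hu
        · exact hzR
      · have : b.length = r.length + 2 := by simp [hbdef]
        omega
      · exact Or.inl ⟨j, by rw [oplus_calc]; exact hrot.symm⟩
  · rintro (⟨k, rfl⟩ | ⟨k, rfl⟩) <;>
    · refine ⟨⟨by simp, ?_, Or.inl (by first
        | exact Mlist_quid1 ((k:ℂ) * w)
        | exact Mlist_quid2 ((k:ℂ) * w))⟩, by simp, ?_⟩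
      · intro x hx
        fin_cases hx <;>
          first
            | exact mem_zero w
            | exact ⟨k, rfl⟩
            | exact mem_neg ⟨k, rfl⟩
      · rintro ⟨a, b, ha, hb, hla, hlb, hcyc⟩
        have hlen4 : (oplus a b).length = 4 := by
          rcases hcyc with ⟨k2, h⟩ | ⟨k2, h⟩ <;> rw [h] <;> simp
        rw [oplus_len a b (by omega) (by omega)] at hlen4
        exact no3 hwmu b hb.2.1 (by omega) hb.2.2
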